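/- Let n ≥ 2, σ: E(K_{4n}) → {-1,1} with σ(E(K_{4n})) = 0, M a perfect matching minimizing |σ(M)| with σ(M) = 2, and suppose the set of vertices covered by edges of M labeled +1 induces no edge labeled −1. Then the number of edges labeled +1 in K_{4n} is at least (4n−1)(n+1), contradicting that it equals 4n² − n; hence some edge labeled −1 joins two +1-edges of M. -/

import Mathlib

open Finset

noncomputable def sumE {m : ℕ} (σ : Sym2 (Fin m) → ℤ) (S : Set (Sym2 (Fin m))) : ℤ :=
  ∑ e ∈ S.toFinite.toFinset, σ e

def Kc (m : ℕ) : SimpleGraph (Fin m) := ⊤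

lemma match_unique {m : ℕ} {M : (Kc m).Subgraph} (hM : M.IsPerfectMatching)
    {e f : Sym2 (Fin m)} (he : e ∈ M.edgeSet) (hf : f ∈ M.edgeSet)
    {v : Fin m} (hve : v ∈ e) (hvf : v ∈ f) : e = f := by
  induction e with
  | _ x y =>
  induction f with
  | _ z w =>
  rw [SimpleGraph.Subgraph.mem_edgeSet] at he hf
  obtain ⟨p, -, hp⟩ := SimpleGraph.Subgraph.isPerfectMatching_iff.mp hM v
  rw [Sym2.mem_iff] at hve hvf
  rcases hve with rfl | rfl <;> rcases hvf with rfl | rfl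
  · rw [hp y he, hp w hf]
  · rw [Sym2.eq_swap (a := z)]; rw [hp y he, hp z hf.symm]
  · rw [Sym2.eq_swap (a := x)]; rw [hp x he.symm, hp w hf]
  · rw [Sym2.eq_swap (a := x), Sym2.eq_swap (a := z)]
    rw [hp x he.symm, hp z hf.symm]

lemma match_nondiag {m : ℕ} {M : (Kc m).Subgraph}
    {e : Sym2 (Fin m)} (he : e ∈ M.edgeSet) : ¬ e.IsDiag :=
  (Kc m).not_isDiag_of_mem_edgeSet (M.edgeSet_subset he)

lemma match_cover {m : ℕ} {M : (Kc m).Subgraph} (hM : M.IsPerfectMatching)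
    (v : Fin m) : ∃ e ∈ M.edgeSet, v ∈ e := by
  obtain ⟨p, hp, -⟩ := SimpleGraph.Subgraph.isPerfectMatching_iff.mp hM v
  exact ⟨s(v, p), SimpleGraph.Subgraph.mem_edgeSet.mpr hp, Sym2.mem_mk_left _ _⟩

lemma swap_matching {m : ℕ} {M : (Kc m).Subgraph} (hM : M.IsPerfectMatching)
    {a b c d : Fin m} (hab : s(a,b) ∈ M.edgeSet) (hcd : s(c,d) ∈ M.edgeSet)
    (hne : s(a,b) ≠ s(c,d)) :
    ∃ N : (Kc m).Subgraph, N.IsPerfectMatching ∧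
      N.edgeSet = (M.edgeSet \ {s(a,b), s(c,d)}) ∪ {s(a,c), s(b,d)} := by
  have hab' : M.Adj a b := SimpleGraph.Subgraph.mem_edgeSet.mp hab
  have hcd' : M.Adj c d := SimpleGraph.Subgraph.mem_edgeSet.mp hcd
  have hAB : a ≠ b := by have := match_nondiag hab; simpa using this
  have hCD : c ≠ d := by have := match_nondiag hcd; simpa using this
  have hac : a ≠ c := fun h => hne (match_unique hM hab hcd (v := a) (by simp)
    (by simp [h]))
  have had : a ≠ d := fun h => hne (match_unique hM hab hcd (v := a) (by simp)
    (by simp [h]))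
  have hbc : b ≠ c := fun h => hne (match_unique hM hab hcd (v := b) (by simp)
    (by simp [h]))
  have hbd : b ≠ d := fun h => hne (match_unique hM hab hcd (v := b) (by simp)
    (by simp [h]))
  have huniq := SimpleGraph.Subgraph.isPerfectMatching_iff.mp hM
  refine ⟨⟨Set.univ,
    fun x y => (M.Adj x y ∧ s(x,y) ≠ s(a,b) ∧ s(x,y) ≠ s(c,d)) ∨
      s(x,y) = s(a,c) ∨ s(x,y) = s(b,d),
    ?_, fun _ => Set.mem_univ _, ?_⟩, ?_, ?_⟩
  · rintro x y (⟨h, -, -⟩ | h | h)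
    · exact M.adj_sub h
    · rw [Sym2.eq_iff] at h
      rcases h with ⟨rfl, rfl⟩ | ⟨rfl, rfl⟩
      · simpa [Kc] using hac
      · simpa [Kc] using hac.symm
    · rw [Sym2.eq_iff] at h
      rcases h with ⟨rfl, rfl⟩ | ⟨rfl, rfl⟩
      · simpa [Kc] using hbd
      · simpa [Kc] using hbd.symm
  · constructor; intro x y h
    rw [Sym2.eq_swap (a := y)] at *
    rcases h with ⟨h1, h2⟩ | h | h
    · exact Or.inl ⟨h1.symm, h2⟩
    · exact Or.inr (Or.inl h)
    · exact Or.inr (Or.inr h)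
  · rw [SimpleGraph.Subgraph.isPerfectMatching_iff]
    intro v
    by_cases hva : v = a
    · subst hva
      refine ⟨c, Or.inr (Or.inl rfl), ?_⟩
      rintro w (⟨h1, h2, -⟩ | h | h)
      · exact absurd (by rw [(huniq v).unique h1 hab']) h2
      · rw [Sym2.eq_iff] at h; tauto
      · rw [Sym2.eq_iff] at h; tauto
    by_cases hvb : v = b
    · subst hvb
      refine ⟨d, Or.inr (Or.inr (by rw [Sym2.eq_iff]; tauto)), ?_⟩
      rintro w (⟨h1, h2, -⟩ | h | h)
      · have : M.Adj a v := hab'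
        have := (huniq v).unique h1 this.symm
        subst this
        exact absurd (by rw [Sym2.eq_swap]) h2
      · rw [Sym2.eq_iff] at h; tauto
      · rw [Sym2.eq_iff] at h; tauto
    by_cases hvc : v = c
    · subst hvc
      refine ⟨a, Or.inr (Or.inl (by rw [Sym2.eq_iff]; tauto)), ?_⟩
      rintro w (⟨h1, -, h3⟩ | h | h)
      · exact absurd (by rw [(huniq v).unique h1 hcd']) h3
      · rw [Sym2.eq_iff] at h; tauto
      · rw [Sym2.eq_iff] at h; tauto
    by_cases hvd : v = d
    · subst hvd
      refine ⟨b, Or.inr (Or.inr (by rw [Sym2.eq_iff]; tauto)), ?_⟩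
      rintro w (⟨h1, -, h3⟩ | h | h)
      · have : M.Adj c v := hcd'
        have := (huniq v).unique h1 this.symm
        subst this
        exact absurd (by rw [Sym2.eq_swap]) h3
      · rw [Sym2.eq_iff] at h; tauto
      · rw [Sym2.eq_iff] at h; tauto
    · obtain ⟨p, hp, hpu⟩ := huniq v
      have hpa : p ≠ a := by
        intro h; subst h
        exact hvb ((huniq p).unique hp.symm hab')
      have hpb : p ≠ b := by
        intro h; subst h
        exact hva ((huniq p).unique hp.symm hab'.symm)
      have hpc : p ≠ c := by
        intro h; subst h
        exact hvd ((huniq p).unique hp.symm hcd')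
      have hpd : p ≠ d := by
        intro h; subst h
        exact hvc ((huniq p).unique hp.symm hcd'.symm)
      refine ⟨p, Or.inl ⟨hp, ?_, ?_⟩, ?_⟩
      · rw [Ne, Sym2.eq_iff]; tauto
      · rw [Ne, Sym2.eq_iff]; tauto
      · rintro w (⟨h1, -, -⟩ | h | h)
        · exact hpu w h1
        · rw [Sym2.eq_iff] at h; tauto
        · rw [Sym2.eq_iff] at h; tauto
  · ext e
    induction e with
    | _ x y =>
    simp only [SimpleGraph.Subgraph.mem_edgeSet, Set.mem_union, Set.mem_diff,
      Set.mem_insert_iff, Set.mem_singleton_iff, not_or]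

lemma match_distinct {m : ℕ} {M : (Kc m).Subgraph} (hM : M.IsPerfectMatching)
    {a b c d : Fin m} (hab : s(a,b) ∈ M.edgeSet) (hcd : s(c,d) ∈ M.edgeSet)
    (hne : s(a,b) ≠ s(c,d)) :
    a ≠ b ∧ c ≠ d ∧ a ≠ c ∧ a ≠ d ∧ b ≠ c ∧ b ≠ d := by
  refine ⟨by have := match_nondiag hab; simpa using this,
    by have := match_nondiag hcd; simpa using this, ?_, ?_, ?_, ?_⟩
  · exact fun h => hne (match_unique hM hab hcd (v := a) (by simp) (by simp [h]))
  · exact fun h => hne (match_unique hM hab hcd (v := a) (by simp) (by simp [h]))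
  · exact fun h => hne (match_unique hM hab hcd (v := b) (by simp) (by simp [h]))
  · exact fun h => hne (match_unique hM hab hcd (v := b) (by simp) (by simp [h]))

lemma cross_plus {m : ℕ} {σ : Sym2 (Fin m) → ℤ}
    (hσ : ∀ e ∈ (Kc m).edgeSet, σ e = 1 ∨ σ e = -1)
    (hno : ∀ N : (Kc m).Subgraph, N.IsPerfectMatching → sumE σ N.edgeSet ≠ 0)
    {M : (Kc m).Subgraph} (hM : M.IsPerfectMatching)
    {a b c d : Fin m} (hab : s(a,b) ∈ M.edgeSet) (hcd : s(c,d) ∈ M.edgeSet)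
    (hne : s(a,b) ≠ s(c,d)) (hMsum : sumE σ M.edgeSet = 2)
    (hsab : σ s(a,b) = 1) (hscd : σ s(c,d) = -1) :
    σ s(a,c) = 1 ∨ σ s(b,d) = 1 := by
  obtain ⟨hAB, hCD, hac, had, hbc, hbd⟩ := match_distinct hM hab hcd hne
  by_contra hcon
  push_neg at hcon
  have h1 : σ s(a,c) = -1 := by
    rcases hσ s(a,c) (by simpa [Kc] using hac) with h | h
    · exact absurd h hcon.1
    · exact h
  have h2 : σ s(b,d) = -1 := by
    rcases hσ s(b,d) (by simpa [Kc] using hbd) with h | h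
    · exact absurd h hcon.2
    · exact h
  obtain ⟨N, hN, hE⟩ := swap_matching hM hab hcd hne
  apply hno N hN
  have hacM : s(a,c) ∉ M.edgeSet := by
    intro h
    have := match_unique hM h hab (v := a) (by simp) (by simp)
    rw [Sym2.eq_iff] at this; tauto
  have hbdM : s(b,d) ∉ M.edgeSet := by
    intro h
    have := match_unique hM h hcd (v := d) (by simp) (by simp)
    rw [Sym2.eq_iff] at this; tauto
  have hacbd : s(a,c) ≠ s(b,d) := by rw [Ne, Sym2.eq_iff]; tauto
  set F := M.edgeSet.toFinite.toFinset with hF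
  have hNF : N.edgeSet.toFinite.toFinset = (F \ {s(a,b), s(c,d)}) ∪ {s(a,c), s(b,d)} := by
    ext e
    simp only [Set.Finite.mem_toFinset, hE, Set.mem_union, Set.mem_diff, Set.mem_insert_iff,
      Set.mem_singleton_iff, Finset.mem_union, Finset.mem_sdiff, Finset.mem_insert,
      Finset.mem_singleton, hF]
  have hsub : ({s(a,b), s(c,d)} : Finset (Sym2 (Fin m))) ⊆ F := by
    intro e he
    simp only [Finset.mem_insert, Finset.mem_singleton] at he
    rcases he with rfl | rfl <;> simp [hF, Set.Finite.mem_toFinset, hab, hcd]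
  have hdisj : Disjoint (F \ {s(a,b), s(c,d)}) ({s(a,c), s(b,d)} : Finset (Sym2 (Fin m))) := by
    simp only [Finset.disjoint_right, Finset.mem_insert, Finset.mem_singleton, Finset.mem_sdiff]
    rintro e (rfl | rfl) ⟨hmem, -⟩
    · exact hacM (by simpa [hF, Set.Finite.mem_toFinset] using hmem)
    · exact hbdM (by simpa [hF, Set.Finite.mem_toFinset] using hmem)
  show sumE σ N.edgeSet = 0
  unfold sumE
  rw [hNF, Finset.sum_union hdisj, Finset.sum_sdiff_eq_sub hsub,
    Finset.sum_pair hne, Finset.sum_pair hacbd]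
  have : ∑ e ∈ F, σ e = 2 := hMsum
  rw [this, hsab, hscd, h1, h2]
  ring

lemma endpoints_card {m : ℕ} {e : Sym2 (Fin m)} (he : ¬ e.IsDiag) :
    (univ.filter (fun v => v ∈ e)).card = 2 := by
  induction e with
  | _ x y =>
  have hxy : x ≠ y := by simpa using he
  have : (univ.filter (fun v => v ∈ s(x,y))) = {x, y} := by
    ext v; simp [Sym2.mem_iff]
  rw [this, Finset.card_pair hxy]

lemma cover_card {m : ℕ} {M : (Kc m).Subgraph} (hM : M.IsPerfectMatching)
    (T : Finset (Sym2 (Fin m))) (hT : ∀ e ∈ T, e ∈ M.edgeSet) :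
    (univ.filter (fun v : Fin m => ∃ e ∈ T, v ∈ e)).card = 2 * T.card := by
  classical
  set f : Fin m → Sym2 (Fin m) :=
    fun v => if h : ∃ e ∈ T, v ∈ e then h.choose else s(v,v) with hf
  have hfmem : ∀ v, (∃ e ∈ T, v ∈ e) → f v ∈ T ∧ v ∈ f v := by
    intro v h
    simp only [hf, dif_pos h]
    exact ⟨h.choose_spec.1, h.choose_spec.2⟩
  rw [Finset.card_eq_sum_card_fiberwise
    (f := f) (t := T) (fun v hv => (hfmem v (by simpa using hv)).1)]
  rw [Finset.sum_congr rfl (fun e he => ?_), Finset.sum_const, smul_eq_mul, mul_comm]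
  have hfib : (univ.filter (fun v : Fin m => ∃ e ∈ T, v ∈ e)).filter (fun v => f v = e)
      = univ.filter (fun v => v ∈ e) := by
    ext v
    simp only [Finset.mem_filter, Finset.mem_univ, true_and]
    constructor
    · rintro ⟨hv, rfl⟩
      exact (hfmem v hv).2
    · intro hv
      have hex : ∃ e' ∈ T, v ∈ e' := ⟨e, he, hv⟩
      obtain ⟨hfT, hvf⟩ := hfmem v hex
      exact ⟨hex, match_unique hM (hT _ hfT) (hT _ he) hvf hv⟩
  rw [hfib, endpoints_card (match_nondiag (hT _ he))]

lemma sym2_eq_of_mem {α : Type*} {x y : α} {e : Sym2 α} (hx : x ∈ e) (hy : y ∈ e)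
    (hxy : x ≠ y) : e = s(x,y) := by
  induction e with
  | _ a b =>
  rw [Sym2.mem_iff] at hx hy
  rcases hx with rfl | rfl <;> rcases hy with rfl | rfl
  · exact absurd rfl hxy
  · rfl
  · exact Sym2.eq_swap
  · exact absurd rfl hxy

lemma pair_le_card {α : Type*} [DecidableEq α] {s : Finset α} {g1 g2 : α}
    (h1 : g1 ∈ s) (h2 : g2 ∈ s) (h : g1 ≠ g2) : 2 ≤ s.card := by
  calc 2 = ({g1, g2} : Finset α).card := (Finset.card_pair h).symm
  _ ≤ s.card := Finset.card_le_card (by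
    intro x hx
    simp only [Finset.mem_insert, Finset.mem_singleton] at hx
    rcases hx with rfl | rfl <;> assumption)

lemma nondiag_sym2_card {α : Type*} [DecidableEq α] (S : Finset α) :
    (S.sym2.filter (fun e => ¬ e.IsDiag)).card = S.card.choose 2 := by
  have hdiagset : S.sym2.filter (fun e => e.IsDiag) = S.image (fun a => s(a,a)) := by
    ext e
    induction e with
    | _ x y =>
    simp only [Finset.mem_filter, Finset.mk_mem_sym2_iff, Finset.mem_image,
      Sym2.mk_isDiag_iff, Sym2.eq_iff]
    constructor
    · rintro ⟨⟨hx, -⟩, rfl⟩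
      exact ⟨x, hx, Or.inl ⟨rfl, rfl⟩⟩
    · rintro ⟨a, ha, (⟨rfl, rfl⟩ | ⟨rfl, rfl⟩)⟩ <;> exact ⟨⟨ha, ha⟩, rfl⟩
  have hdiagcard : (S.sym2.filter (fun e => e.IsDiag)).card = S.card := by
    rw [hdiagset]
    apply Finset.card_image_of_injective
    intro a b hab
    simpa [Sym2.eq_iff] using hab
  have hsplit := Finset.card_filter_add_card_filter_not
    (s := S.sym2) (p := fun e => e.IsDiag)
  have hcs : S.sym2.card = (S.card + 1).choose 2 := Finset.card_sym2 _
  have hch : (S.card + 1).choose 2 = S.card.choose 2 + S.card := by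
    rw [Nat.choose_succ_succ]
    simp [Nat.choose_one_right, Nat.add_comm]
  omega

set_option maxHeartbeats 2000000 in
theorem stmt7 (n : ℕ) (hn : 2 ≤ n) (σ : Sym2 (Fin (4*n)) → ℤ)
    (hσ : ∀ e ∈ (Kc (4*n)).edgeSet, σ e = 1 ∨ σ e = -1)
    (hsum : sumE σ (Kc (4*n)).edgeSet = 0)
    (hno : ∀ N : (Kc (4*n)).Subgraph, N.IsPerfectMatching → sumE σ N.edgeSet ≠ 0)
    (M : (Kc (4*n)).Subgraph) (hM : M.IsPerfectMatching)
    (hmin : ∀ N : (Kc (4*n)).Subgraph, N.IsPerfectMatching →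
      |sumE σ M.edgeSet| ≤ |sumE σ N.edgeSet|)
    (hM2 : sumE σ M.edgeSet = 2) :
    ((∀ u v : Fin (4*n), u ≠ v →
        (∃ e ∈ M.edgeSet, σ e = 1 ∧ u ∈ e) →
        (∃ e ∈ M.edgeSet, σ e = 1 ∧ v ∈ e) →
        σ s(u,v) ≠ -1) →
      (4*n-1)*(n+1) ≤ {e ∈ (Kc (4*n)).edgeSet | σ e = 1}.ncard) ∧
    ∃ u1 u2 v1 v2 : Fin (4*n),
      s(u1,u2) ∈ M.edgeSet ∧ s(v1,v2) ∈ M.edgeSet ∧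
      s(u1,u2) ≠ s(v1,v2) ∧
      σ s(u1,u2) = 1 ∧ σ s(v1,v2) = 1 ∧ σ s(u1,v1) = -1 := by
  classical
  set Efin := (Kc (4*n)).edgeSet.toFinite.toFinset with hEfin
  set Mfin := M.edgeSet.toFinite.toFinset with hMfin
  have hMsubE : ∀ e ∈ Mfin, e ∈ (Kc (4*n)).edgeSet := by
    intro e he
    rw [hMfin, Set.Finite.mem_toFinset] at he
    exact M.edgeSet_subset he
  set P := Mfin.filter (fun e => σ e = 1) with hP
  set Q := Mfin.filter (fun e => σ e = -1) with hQ
  have hQ' : Q = Mfin.filter (fun e => ¬ σ e = 1) := by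
    apply Finset.filter_congr
    intro e he
    rcases hσ e (hMsubE e he) with h | h <;> simp [h]
  -- |Mfin| = 2n
  have hMcard : Mfin.card = 2*n := by
    have h1 := cover_card hM Mfin (fun e he => (Set.Finite.mem_toFinset _).mp he)
    have h2 : (univ.filter (fun v : Fin (4*n) => ∃ e ∈ Mfin, v ∈ e)) = univ := by
      ext v
      simp only [Finset.mem_filter, Finset.mem_univ, true_and, iff_true]
      obtain ⟨e, he, hv⟩ := match_cover hM v
      exact ⟨e, (Set.Finite.mem_toFinset _).mpr he, hv⟩
    rw [h2] at h1
    simp only [Finset.card_univ, Fintype.card_fin] at h1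
    omega
  -- P and Q cards
  have hPQsum : P.card + Q.card = 2*n := by
    rw [hP, hQ', Finset.card_filter_add_card_filter_not, hMcard]
  have hPQdiff : (P.card : ℤ) - Q.card = 2 := by
    have h0 : ∑ e ∈ Mfin, σ e = 2 := hM2
    rw [← Finset.sum_filter_add_sum_filter_not Mfin (fun e => σ e = 1) σ] at h0
    have hA : ∑ e ∈ Mfin.filter (fun e => σ e = 1), σ e = P.card := by
      rw [Finset.sum_congr rfl (fun e he => (Finset.mem_filter.mp he).2)]
      simp [hP]
    have hB : ∑ e ∈ Mfin.filter (fun e => ¬ σ e = 1), σ e = -Q.card := by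
      rw [← hQ']
      rw [Finset.sum_congr rfl (fun e he => (Finset.mem_filter.mp he).2)]
      simp [hQ]
    rw [hA, hB] at h0
    omega
  have hPcard : P.card = n + 1 := by omega
  have hQcard : Q.card = n - 1 := by omega
  -- total plus edges
  set Pl := Efin.filter (fun e => σ e = 1) with hPl
  set Mi := Efin.filter (fun e => σ e = -1) with hMi
  have hMi' : Mi = Efin.filter (fun e => ¬ σ e = 1) := by
    apply Finset.filter_congr
    intro e he
    rw [hEfin, Set.Finite.mem_toFinset] at he
    rcases hσ e he with h | h <;> simp [h]
  have hEcard : Efin.card = 2*n*(4*n-1) := by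
    have h1 : Efin = (univ : Finset (Fin (4*n))).sym2.filter (fun e => ¬ e.IsDiag) := by
      ext e
      induction e with
      | _ x y =>
      rw [hEfin, Set.Finite.mem_toFinset]
      simp only [Finset.mem_filter, Finset.mk_mem_sym2_iff, Finset.mem_univ, and_self,
        true_and, Sym2.mk_isDiag_iff, SimpleGraph.mem_edgeSet]
      constructor
      · intro h; simpa [Kc] using h.ne
      · intro h; simpa [Kc] using h
    rw [h1, nondiag_sym2_card, Finset.card_univ, Fintype.card_fin, Nat.choose_two_right]
    obtain ⟨k, rfl⟩ : ∃ k, n = k + 2 := ⟨n - 2, by omega⟩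
    have h2 : 4*(k+2) - 1 = 4*k + 7 := by omega
    rw [h2]
    have h3 : 4*(k+2) * (4*k+7) = 2*(2*(k+2)*(4*k+7)) := by ring
    omega
  have hPlMi : Pl.card + Mi.card = 2*n*(4*n-1) := by
    rw [hPl, hMi', Finset.card_filter_add_card_filter_not, hEcard]
  have hPlMieq : (Pl.card : ℤ) - Mi.card = 0 := by
    have h0 : ∑ e ∈ Efin, σ e = 0 := hsum
    rw [← Finset.sum_filter_add_sum_filter_not Efin (fun e => σ e = 1) σ] at h0
    have hA : ∑ e ∈ Efin.filter (fun e => σ e = 1), σ e = Pl.card := by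
      rw [Finset.sum_congr rfl (fun e he => (Finset.mem_filter.mp he).2)]
      simp [hPl]
    have hB : ∑ e ∈ Efin.filter (fun e => ¬ σ e = 1), σ e = -Mi.card := by
      rw [← hMi']
      rw [Finset.sum_congr rfl (fun e he => (Finset.mem_filter.mp he).2)]
      simp [hMi]
    rw [hA, hB] at h0
    omega
  have hPlcard : Pl.card = n*(4*n-1) := by
    have : 2*(Pl.card) = 2*(n*(4*n-1)) := by
      have : 2*n*(4*n-1) = 2*(n*(4*n-1)) := by ring
      omega
    omega
  have hsetPl : {e ∈ (Kc (4*n)).edgeSet | σ e = 1} = ↑Pl := by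
    ext e
    constructor
    · rintro ⟨h1, h2⟩
      exact Finset.mem_coe.mpr (Finset.mem_filter.mpr
        ⟨(Set.Finite.mem_toFinset _).mpr h1, h2⟩)
    · intro h
      have h' := Finset.mem_filter.mp (Finset.mem_coe.mp h)
      exact ⟨(Set.Finite.mem_toFinset _).mp h'.1, h'.2⟩
  -- the key counting bound
  have key : (∀ u v : Fin (4*n), u ≠ v →
        (∃ e ∈ M.edgeSet, σ e = 1 ∧ u ∈ e) →
        (∃ e ∈ M.edgeSet, σ e = 1 ∧ v ∈ e) →
        σ s(u,v) ≠ -1) → (4*n-1)*(n+1) ≤ Pl.card := by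
    intro H
    set Sfin := univ.filter (fun v : Fin (4*n) => ∃ e ∈ P, v ∈ e) with hSfin
    have hPM : ∀ e ∈ P, e ∈ M.edgeSet := by
      intro e he
      exact (Set.Finite.mem_toFinset _).mp (Finset.mem_filter.mp he).1
    have hScard : Sfin.card = 2*n + 2 := by
      rw [hSfin, cover_card hM P hPM, hPcard]; ring
    -- vertices in Sfin are covered by a plus matching edge
    have hSmem : ∀ v ∈ Sfin, ∃ e ∈ M.edgeSet, σ e = 1 ∧ v ∈ e := by
      intro v hv
      rw [hSfin, Finset.mem_filter] at hv
      obtain ⟨-, e, he, hve⟩ := hv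
      exact ⟨e, hPM e he, (Finset.mem_filter.mp he).2, hve⟩
    -- internal edges
    set A := Sfin.sym2.filter (fun e => ¬ e.IsDiag) with hA
    have hAsub : A ⊆ Pl := by
      intro e he
      rw [hA, Finset.mem_filter] at he
      obtain ⟨hmem, hdiag⟩ := he
      induction e with
      | _ x y =>
      have hx : x ∈ Sfin := (Finset.mem_sym2_iff.mp hmem) x (by simp)
      have hy : y ∈ Sfin := (Finset.mem_sym2_iff.mp hmem) y (by simp)
      have hxy : x ≠ y := by simpa using hdiag
      have hedge : s(x,y) ∈ (Kc (4*n)).edgeSet := by simpa [Kc] using hxy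
      rw [hPl, Finset.mem_filter]
      refine ⟨(Set.Finite.mem_toFinset _).mpr hedge, ?_⟩
      rcases hσ _ hedge with h | h
      · exact h
      · exact absurd h (H x y hxy (hSmem x hx) (hSmem y hy))
    have hAcard : A.card = (n+1)*(2*n+1) := by
      rw [hA, nondiag_sym2_card, hScard]
      rw [Nat.choose_two_right]
      have h2 : (2*n+2) - 1 = 2*n+1 := by omega
      rw [h2]
      have h3 : (2*n+2) * (2*n+1) = 2*((n+1)*(2*n+1)) := by ring
      omega
    -- cross edges
    set cross : Sym2 (Fin (4*n)) → Sym2 (Fin (4*n)) → Finset (Sym2 (Fin (4*n))) :=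
      fun e f => Pl.filter (fun g => ∃ x ∈ e, ∃ y ∈ f, g = s(x,y)) with hcross
    set B := (P ×ˢ Q).biUnion (fun p => cross p.1 p.2) with hB
    have hQM : ∀ f ∈ Q, f ∈ M.edgeSet := by
      intro f hf
      exact (Set.Finite.mem_toFinset _).mp (Finset.mem_filter.mp hf).1
    have hPQne : ∀ e ∈ P, ∀ f ∈ Q, e ≠ f := by
      intro e he f hf h
      have h1 : σ e = 1 := (Finset.mem_filter.mp he).2
      have h2 : σ f = -1 := (Finset.mem_filter.mp hf).2
      rw [h] at h1; omega
    have hdisjB : ∀ p ∈ P ×ˢ Q, ∀ p' ∈ P ×ˢ Q, p ≠ p' →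
        Disjoint (cross p.1 p.2) (cross p'.1 p'.2) := by
      rintro ⟨e, f⟩ hp ⟨e', f'⟩ hp' hne
      rw [Finset.mem_product] at hp hp'
      rw [Finset.disjoint_left]
      rintro g hg hg'
      rw [hcross, Finset.mem_filter] at hg hg'
      obtain ⟨-, x, hx, y, hy, rfl⟩ := hg
      obtain ⟨-, x', hx', y', hy', hgeq⟩ := hg'
      rw [Sym2.eq_iff] at hgeq
      rcases hgeq with ⟨rfl, rfl⟩ | ⟨h1, h2⟩
      · have he : e = e' := match_unique hM (hPM _ hp.1) (hPM _ hp'.1) hx hx'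
        have hf : f = f' := match_unique hM (hQM _ hp.2) (hQM _ hp'.2) hy hy'
        exact hne (by rw [he, hf])
      · subst h1; subst h2
        have : e' = f := match_unique hM (hPM _ hp'.1) (hQM _ hp.2) hx' hy
        exact hPQne _ hp'.1 _ hp.2 this
    have hcrosscard : ∀ p ∈ P ×ˢ Q, 2 ≤ (cross p.1 p.2).card := by
      rintro ⟨e, f⟩ hp
      rw [Finset.mem_product] at hp
      have heM : e ∈ M.edgeSet := hPM _ hp.1
      have hfM : f ∈ M.edgeSet := hQM _ hp.2
      have hσe : σ e = 1 := (Finset.mem_filter.mp hp.1).2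
      have hσf : σ f = -1 := (Finset.mem_filter.mp hp.2).2
      have hef : e ≠ f := hPQne _ hp.1 _ hp.2
      obtain ⟨a, b, rfl⟩ : ∃ a b, e = s(a,b) := by
        induction e with
        | _ a b => exact ⟨a, b, rfl⟩
      obtain ⟨c, d, rfl⟩ : ∃ c d, f = s(c,d) := by
        induction f with
        | _ c d => exact ⟨c, d, rfl⟩
      obtain ⟨hAB, hCD, hac2, had2, hbc2, hbd2⟩ := match_distinct hM heM hfM hef
      have hcd' : s(d,c) ∈ M.edgeSet := by rwa [Sym2.eq_swap]
      have hef' : s(a,b) ≠ s(d,c) := by rwa [Sym2.eq_swap (a := d)]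
      have hσf' : σ s(d,c) = -1 := by rwa [Sym2.eq_swap (a := d)]
      have H1 := cross_plus hσ hno hM heM hfM hef hM2 hσe hσf
      have H2 := cross_plus hσ hno hM heM hcd' hef' hM2 hσe hσf'
      have hmemc : ∀ x y : Fin (4*n), x ∈ s(a,b) → y ∈ s(c,d) → x ≠ y → σ s(x,y) = 1 →
          s(x,y) ∈ cross s(a,b) s(c,d) := by
        intro x y hx hy hxy hs
        rw [hcross, Finset.mem_filter]
        refine ⟨?_, x, hx, y, hy, rfl⟩
        rw [hPl, Finset.mem_filter]
        exact ⟨(Set.Finite.mem_toFinset _).mpr (by simpa [Kc] using hxy), hs⟩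
      rcases H1 with h1 | h1 <;> rcases H2 with h2 | h2
      · exact pair_le_card
          (hmemc a c (by simp) (by simp) hac2 h1)
          (hmemc a d (by simp) (by simp) had2 h2)
          (by rw [Ne, Sym2.eq_iff]; tauto)
      · exact pair_le_card
          (hmemc a c (by simp) (by simp) hac2 h1)
          (hmemc b c (by simp) (by simp) hbc2 h2)
          (by rw [Ne, Sym2.eq_iff]; tauto)
      · exact pair_le_card
          (hmemc b d (by simp) (by simp) hbd2 h1)
          (hmemc a d (by simp) (by simp) had2 h2)
          (by rw [Ne, Sym2.eq_iff]; tauto)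
      · exact pair_le_card
          (hmemc b d (by simp) (by simp) hbd2 h1)
          (hmemc b c (by simp) (by simp) hbc2 h2)
          (by rw [Ne, Sym2.eq_iff]; tauto)
    have hBcard : 2*((n+1)*(n-1)) ≤ B.card := by
      rw [hB, Finset.card_biUnion hdisjB]
      calc 2*((n+1)*(n-1)) = (P ×ˢ Q).card * 2 := by
            rw [Finset.card_product, hPcard, hQcard]; ring
      _ = ∑ _p ∈ P ×ˢ Q, 2 := by rw [Finset.sum_const, smul_eq_mul]
      _ ≤ ∑ p ∈ P ×ˢ Q, (cross p.1 p.2).card := Finset.sum_le_sum hcrosscard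
    have hBsub : B ⊆ Pl := by
      intro g hg
      rw [hB, Finset.mem_biUnion] at hg
      obtain ⟨p, -, hg⟩ := hg
      exact (Finset.mem_filter.mp hg).1
    have hABdisj : Disjoint A B := by
      rw [Finset.disjoint_left]
      intro g hgA hgB
      rw [hB, Finset.mem_biUnion] at hgB
      obtain ⟨⟨e, f⟩, hp, hgc⟩ := hgB
      rw [Finset.mem_product] at hp
      rw [hcross, Finset.mem_filter] at hgc
      obtain ⟨-, x, hx, y, hy, rfl⟩ := hgc
      rw [hA, Finset.mem_filter] at hgA
      have hyS : y ∈ Sfin := (Finset.mem_sym2_iff.mp hgA.1) y (by simp)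
      obtain ⟨e', he', -, hye'⟩ := hSmem y hyS
      have : e' = f := match_unique hM he' (hQM _ hp.2) hye' hy
      have h1 : σ e' = 1 := by
        obtain ⟨e'', he'', hσ'', hy''⟩ := hSmem y hyS
        rw [match_unique hM he' he'' hye' hy'']
        exact hσ''
      have h2 : σ f = -1 := (Finset.mem_filter.mp hp.2).2
      rw [this] at h1
      omega
    have htot : A.card + B.card ≤ Pl.card := by
      rw [← Finset.card_union_of_disjoint hABdisj]
      exact Finset.card_le_card (Finset.union_subset hAsub hBsub)
    have harith : (4*n-1)*(n+1) ≤ (n+1)*(2*n+1) + 2*((n+1)*(n-1)) := by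
      obtain ⟨k, rfl⟩ : ∃ k, n = k + 2 := ⟨n - 2, by omega⟩
      apply le_of_eq
      have h1 : 4*(k+2)-1 = 4*k+7 := by omega
      have h2 : (k+2)-1 = k+1 := by omega
      rw [h1, h2]; ring
    omega
  constructor
  · intro H
    rw [hsetPl, Set.ncard_coe_finset]
    exact key H
  · by_contra hcon
    push_neg at hcon
    have H : ∀ u v : Fin (4*n), u ≠ v →
        (∃ e ∈ M.edgeSet, σ e = 1 ∧ u ∈ e) →
        (∃ e ∈ M.edgeSet, σ e = 1 ∧ v ∈ e) →
        σ s(u,v) ≠ -1 := by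
      rintro u v huv ⟨e, he, hσe, hue⟩ ⟨f, hf, hσf, hvf⟩
      by_cases hef : e = f
      · subst hef
        rw [← sym2_eq_of_mem hue hvf huv, hσe]
        omega
      · obtain ⟨u2, rfl⟩ := Sym2.mem_iff_exists.mp hue
        obtain ⟨v2, rfl⟩ := Sym2.mem_iff_exists.mp hvf
        exact hcon u u2 v v2 he hf hef hσe hσf
    have hb := key H
    rw [hPlcard] at hb
    have h1 : (4*n-1)*(n+1) = (4*n-1)*n + (4*n-1) := by ring
    have h2 : n*(4*n-1) = (4*n-1)*n := by ring
    omega
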